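/- For ρ > 0, α ∈ ℝ, β > -1, n ∈ ℕ₀ and x ∈ (-1,1), the left-sided fractional integral on (-1,1) satisfies I₋^ρ { (1+x)^β P_n^{(α,β)}(x) } = [Γ(n+β+1)/Γ(n+β+ρ+1)] (1+x)^{β+ρ} P_n^{(α-ρ, β+ρ)}(x), where P_n^{(α,β)} is the Jacobi polynomial. -/

import Mathlib

open Real Filter Set

/-- Left-sided Riemann–Liouville fractional integral of order `ρ` with base point `a`. -/
noncomputable def fracInt (a ρ : ℝ) (u : ℝ → ℝ) (x : ℝ) : ℝ :=
  (1 / Real.Gamma ρ) * ∫ y in a..x, u y * (x - y) ^ (ρ - 1)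

/-- Left-sided Caputo fractional derivative of order `μ ∈ (k-1,k)` with base point `a`. -/
noncomputable def caputoD (k : ℕ) (μ a : ℝ) (u : ℝ → ℝ) : ℝ → ℝ :=
  fracInt a ((k : ℝ) - μ) (iteratedDeriv k u)

/-- Left-sided Riemann–Liouville fractional derivative of order `μ ∈ (k-1,k)` with base point `a`. -/
noncomputable def rlD (k : ℕ) (μ a : ℝ) (u : ℝ → ℝ) : ℝ → ℝ :=
  iteratedDeriv k (fracInt a ((k : ℝ) - μ) u)

/-- Jacobi polynomial `P_n^{(α,β)}` for general real parameters, via the terminating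
hypergeometric representation. -/
noncomputable def jacobiP (n : ℕ) (α β : ℝ) (x : ℝ) : ℝ :=
  (1 / (n.factorial : ℝ)) * ∑ m ∈ Finset.range (n + 1),
    (n.choose m : ℝ) * (∏ i ∈ Finset.range (n - m), (α + m + 1 + i)) *
    (∏ i ∈ Finset.range m, (α + β + n + 1 + i)) * ((x - 1) / 2) ^ m

/-- Legendre polynomial. -/
noncomputable def legendreP (n : ℕ) (x : ℝ) : ℝ := jacobiP n 0 0 x


noncomputable def pp (a : ℝ) (k : ℕ) : ℝ := ∏ i ∈ Finset.range k, (a + i)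

lemma pp_succ (a : ℝ) (k : ℕ) : pp a (k+1) = pp a k * (a + k) := Finset.prod_range_succ _ _

lemma pp_add (a : ℝ) (k j : ℕ) : pp a (k + j) = pp a k * pp (a + k) j := by
  rw [pp, Finset.prod_range_add]
  congr 1
  exact Finset.prod_congr rfl fun i _ => by push_cast; ring

lemma pp_vandermonde (N : ℕ) (a b : ℝ) :
    ∑ j ∈ Finset.range (N+1), (N.choose j : ℝ) * pp a j * pp b (N-j) = pp (a+b) N := by
  induction N with
  | zero => simp [pp]
  | succ N ih =>
    have h1 : ∑ j ∈ Finset.range (N+2), ((N+1).choose j : ℝ) * pp a j * pp b (N+1-j)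
        = pp b (N+1) + ∑ j ∈ Finset.range (N+1),
            (((N.choose j : ℝ) + (N.choose (j+1) : ℝ)) * pp a (j+1) * pp b (N-j)) := by
      rw [Finset.sum_range_succ']
      have e : ∀ j ∈ Finset.range (N+1), ((N+1).choose (j+1) : ℝ) * pp a (j+1) * pp b (N+1-(j+1))
          = ((N.choose j : ℝ) + (N.choose (j+1) : ℝ)) * pp a (j+1) * pp b (N-j) := by
        intro j hj
        have h' : N+1-(j+1) = N - j := by omega
        rw [Nat.choose_succ_succ, h']
        push_cast; ring
      rw [Finset.sum_congr rfl e, add_comm]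
      congr 1
      simp [pp]
    have hU : ∑ j ∈ Finset.range (N+2), (N.choose j : ℝ) * pp a j * pp b (N+1-j)
        = (∑ j ∈ Finset.range (N+1), (N.choose (j+1) : ℝ) * pp a (j+1) * pp b (N-j))
          + pp b (N+1) := by
      rw [Finset.sum_range_succ']
      have e : ∀ j ∈ Finset.range (N+1), (N.choose (j+1) : ℝ) * pp a (j+1) * pp b (N+1-(j+1))
          = (N.choose (j+1) : ℝ) * pp a (j+1) * pp b (N-j) := by
        intro j hj
        have h' : N+1-(j+1) = N - j := by omega
        rw [h']
      rw [Finset.sum_congr rfl e]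
      congr 1
      simp [pp]
    have hU' : ∑ j ∈ Finset.range (N+2), (N.choose j : ℝ) * pp a j * pp b (N+1-j)
        = ∑ j ∈ Finset.range (N+1), (N.choose j : ℝ) * pp a j * pp b (N-j) * (b + (N-j : ℕ)) := by
      rw [Finset.sum_range_succ, Nat.choose_succ_self]
      simp only [Nat.cast_zero, zero_mul, add_zero]
      refine Finset.sum_congr rfl fun j hj => ?_
      have hjN : j ≤ N := Nat.lt_succ_iff.mp (Finset.mem_range.mp hj)
      have h' : N + 1 - j = (N - j) + 1 := by omega
      rw [h', pp_succ]
      ring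
    have h3 : ∀ j ∈ Finset.range (N+1),
        ((N.choose j : ℝ) + (N.choose (j+1) : ℝ)) * pp a (j+1) * pp b (N-j)
        = (N.choose j : ℝ) * pp a j * pp b (N-j) * (a + j)
          + (N.choose (j+1) : ℝ) * pp a (j+1) * pp b (N-j) := by
      intro j hj
      rw [pp_succ]; ring
    have h4 : ∀ j ∈ Finset.range (N+1),
        (N.choose j : ℝ) * pp a j * pp b (N-j) * (a + j)
        + (N.choose j : ℝ) * pp a j * pp b (N-j) * (b + (N-j : ℕ))
        = (a + b + N) * ((N.choose j : ℝ) * pp a j * pp b (N-j)) := by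
      intro j hj
      have hj' : j ≤ N := Nat.lt_succ_iff.mp (Finset.mem_range.mp hj)
      have hc : ((N - j : ℕ) : ℝ) = (N : ℝ) - j := Nat.cast_sub hj'
      rw [hc]; ring
    rw [h1, Finset.sum_congr rfl h3, Finset.sum_add_distrib]
    have h5 : ∑ j ∈ Finset.range (N+1), (N.choose (j+1) : ℝ) * pp a (j+1) * pp b (N-j)
        = (∑ j ∈ Finset.range (N+1), (N.choose j : ℝ) * pp a j * pp b (N-j) * (b + (N-j:ℕ)))
          - pp b (N+1) := by
      rw [← hU', hU]; ring
    rw [h5]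
    have h6 : ∑ j ∈ Finset.range (N+1), (N.choose j : ℝ) * pp a j * pp b (N-j) * (a + j)
        + ∑ j ∈ Finset.range (N+1), (N.choose j : ℝ) * pp a j * pp b (N-j) * (b + (N-j:ℕ))
        = (a + b + N) * pp (a+b) N := by
      rw [← ih, Finset.mul_sum, ← Finset.sum_add_distrib]
      exact Finset.sum_congr rfl h4
    rw [pp_succ (a+b) N]
    push_cast
    linear_combination h6


lemma pp_signflip (c : ℝ) (K : ℕ) : (-1:ℝ)^K * pp c K = pp (-c - K + 1) K := by
  have h1 : pp (-c - K + 1) K = ∏ i ∈ Finset.range K, (-c - K + 1 + (K - 1 - i : ℕ)) := by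
    rw [pp, Finset.prod_range_reflect (fun i => (-c - (K:ℝ) + 1 + i)) K]
  have h2 : ∀ i ∈ Finset.range K, (-c - (K:ℝ) + 1 + ((K - 1 - i : ℕ):ℝ)) = -(c + i) := by
    intro i hi
    have hi' : i < K := Finset.mem_range.mp hi
    have : ((K - 1 - i : ℕ) : ℝ) = (K:ℝ) - 1 - i := by
      push_cast [Nat.cast_sub (by omega : 1 + i ≤ K)]
      rw [Nat.sub_sub]
      push_cast [Nat.cast_sub (by omega : 1 + i ≤ K)]
      ring
    rw [this]; ring
  rw [h1, Finset.prod_congr rfl h2]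
  have h3 : ∀ i ∈ Finset.range K, -(c + (i:ℝ)) = (-1) * (c + i) := fun i _ => by ring
  rw [Finset.prod_congr rfl h3, Finset.prod_mul_distrib, Finset.prod_const, Finset.card_range, pp]

lemma pp_key (N : ℕ) (b c : ℝ) :
    ∑ j ∈ Finset.range (N+1),
      (N.choose j : ℝ) * (-1:ℝ)^(N-j) * pp (b+j+1) (N-j) * pp c j = pp (c - b - N) N := by
  have h : ∀ j ∈ Finset.range (N+1),
      (N.choose j : ℝ) * (-1:ℝ)^(N-j) * pp (b+j+1) (N-j) * pp c j
      = (N.choose j : ℝ) * pp c j * pp (-b - N) (N-j) := by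
    intro j hj
    have hjN : j ≤ N := Nat.lt_succ_iff.mp (Finset.mem_range.mp hj)
    have h1 : (-1:ℝ)^(N-j) * pp (b+j+1) (N-j) = pp (-(b+j+1) - (N-j:ℕ) + 1) (N-j) :=
      pp_signflip _ _
    have h2 : (-(b+(j:ℝ)+1) - ((N-j:ℕ):ℝ) + 1) = -b - N := by
      rw [Nat.cast_sub hjN]; ring
    calc (N.choose j : ℝ) * (-1:ℝ)^(N-j) * pp (b+j+1) (N-j) * pp c j
        = (N.choose j : ℝ) * pp c j * ((-1:ℝ)^(N-j) * pp (b+j+1) (N-j)) := by ring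
      _ = (N.choose j : ℝ) * pp c j * pp (-b - N) (N-j) := by rw [h1, h2]
  rw [Finset.sum_congr rfl h, pp_vandermonde N c (-b - N)]
  congr 1
  ring


lemma jacobi_reflect (n : ℕ) (α β x : ℝ) :
    jacobiP n α β x = (1 / (n.factorial : ℝ)) * ∑ m ∈ Finset.range (n + 1),
      (n.choose m : ℝ) * (-1:ℝ)^(n-m) * pp (β+m+1) (n-m) * pp (α+β+n+1) m * ((1+x)/2)^m := by
  set γ : ℝ := α + β + n + 1 with hγ
  set t : ℝ := (x - 1) / 2 with ht
  have hpow : ∀ m : ℕ, ((1+x)/2 : ℝ)^m = ∑ k ∈ Finset.range (m+1), t^k * (m.choose k : ℝ) := by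
    intro m
    have : (1+x)/2 = t + 1 := by rw [ht]; ring
    rw [this, add_pow]
    exact Finset.sum_congr rfl fun k _ => by rw [one_pow, mul_one]
  have step1 : ∑ m ∈ Finset.range (n + 1),
      (n.choose m : ℝ) * (-1:ℝ)^(n-m) * pp (β+m+1) (n-m) * pp γ m * ((1+x)/2)^m
      = ∑ m ∈ Finset.range (n + 1), ∑ k ∈ Finset.range (n+1),
      (n.choose m : ℝ) * (-1:ℝ)^(n-m) * pp (β+m+1) (n-m) * pp γ m * (t^k * (m.choose k : ℝ)) := by
    refine Finset.sum_congr rfl fun m hm => ?_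
    have hm' : m < n + 1 := Finset.mem_range.mp hm
    rw [hpow m, Finset.mul_sum]
    refine Finset.sum_subset (Finset.range_subset_range.mpr hm') fun k _ hk' => ?_
    have hmk : m < k := by simpa using hk'
    rw [Nat.choose_eq_zero_of_lt hmk]
    simp
  have step2 : ∀ k, k ∈ Finset.range (n+1) →
      ∑ m ∈ Finset.range (n + 1),
        (n.choose m : ℝ) * (-1:ℝ)^(n-m) * pp (β+m+1) (n-m) * pp γ m * (t^k * (m.choose k : ℝ))
      = (n.choose k : ℝ) * pp (α+k+1) (n-k) * pp γ k * t^k := by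
    intro k hk
    have hkn : k ≤ n := Nat.lt_succ_iff.mp (Finset.mem_range.mp hk)
    set N : ℕ := n - k with hN
    have hsplit : ∑ m ∈ Finset.range (n + 1),
        (n.choose m : ℝ) * (-1:ℝ)^(n-m) * pp (β+m+1) (n-m) * pp γ m * (t^k * (m.choose k : ℝ))
        = ∑ m ∈ Finset.Ico k (n+1),
        (n.choose m : ℝ) * (-1:ℝ)^(n-m) * pp (β+m+1) (n-m) * pp γ m * (t^k * (m.choose k : ℝ)) := by
      rw [Finset.range_eq_Ico, ← Finset.sum_Ico_consecutive _ (Nat.zero_le k) (by omega)]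
      have hzero : ∑ m ∈ Finset.Ico 0 k,
          (n.choose m : ℝ) * (-1:ℝ)^(n-m) * pp (β+m+1) (n-m) * pp γ m * (t^k * (m.choose k : ℝ))
          = 0 := by
        refine Finset.sum_eq_zero fun m hm => ?_
        have : m < k := (Finset.mem_Ico.mp hm).2
        rw [Nat.choose_eq_zero_of_lt this]
        simp
      rw [hzero, zero_add]
    rw [hsplit, Finset.sum_Ico_eq_sum_range]
    have hrange : n + 1 - k = N + 1 := by omega
    rw [hrange]
    have hterm : ∀ j ∈ Finset.range (N+1),
        (n.choose (k+j) : ℝ) * (-1:ℝ)^(n-(k+j)) * pp (β+((k+j : ℕ) : ℝ)+1) (n-(k+j)) * pp γ (k+j)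
          * (t^k * ((k+j).choose k : ℝ))
        = ((n.choose k : ℝ) * pp γ k * t^k) *
          ((N.choose j : ℝ) * (-1:ℝ)^(N-j) * pp ((β+k)+j+1) (N-j) * pp (γ+k) j) := by
      intro j hj
      have hjN : j ≤ N := Nat.lt_succ_iff.mp (Finset.mem_range.mp hj)
      have hc : (n.choose (k+j) : ℝ) * ((k+j).choose k : ℝ) = (n.choose k : ℝ) * (N.choose j : ℝ) := by
        have he : k + j - k = j := by omega
        rw [← Nat.cast_mul, ← Nat.cast_mul, Nat.choose_mul (Nat.le_add_right k j), he]
      have h1 : n - (k+j) = N - j := by omega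
      have h2 : pp γ (k+j) = pp γ k * pp (γ+k) j := pp_add γ k j
      have h3 : pp (β+((k+j : ℕ):ℝ)+1) (N-j) = pp ((β+k)+j+1) (N-j) := by
        congr 1
        push_cast
        ring
      rw [h1, h2, h3]
      calc (n.choose (k+j) : ℝ) * (-1:ℝ)^(N-j) * pp ((β+k)+j+1) (N-j) * (pp γ k * pp (γ+k) j)
            * (t^k * ((k+j).choose k : ℝ))
          = ((n.choose (k+j) : ℝ) * ((k+j).choose k : ℝ)) *
            ((-1:ℝ)^(N-j) * pp ((β+k)+j+1) (N-j) * pp γ k * pp (γ+k) j * t^k) := by ring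
        _ = ((n.choose k : ℝ) * (N.choose j : ℝ)) *
            ((-1:ℝ)^(N-j) * pp ((β+k)+j+1) (N-j) * pp γ k * pp (γ+k) j * t^k) := by rw [hc]
        _ = ((n.choose k : ℝ) * pp γ k * t^k) *
            ((N.choose j : ℝ) * (-1:ℝ)^(N-j) * pp ((β+k)+j+1) (N-j) * pp (γ+k) j) := by ring
    rw [Finset.sum_congr rfl hterm, ← Finset.mul_sum, pp_key N (β+k) (γ+k)]
    have h4 : γ + (k:ℝ) - (β+k) - N = α + k + 1 := by
      rw [hγ, hN, Nat.cast_sub hkn]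
      ring
    rw [h4]
    ring
  rw [step1, Finset.sum_comm, Finset.sum_congr rfl step2, jacobiP]
  congr 1

lemma real_beta {p q a : ℝ} (hp : 0 < p) (hq : 0 < q) (ha : 0 < a) :
    ∫ z in (0:ℝ)..a, z ^ (p-1) * (a - z) ^ (q-1)
      = Real.Gamma p * Real.Gamma q / Real.Gamma (p+q) * a ^ (p+q-1) := by
  have hC : ((∫ z in (0:ℝ)..a, z ^ (p-1) * (a - z) ^ (q-1) : ℝ) : ℂ)
      = ∫ z in (0:ℝ)..a, (z:ℂ) ^ ((p:ℂ)-1) * ((a:ℂ) - (z:ℂ)) ^ ((q:ℂ)-1) := by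
    rw [← intervalIntegral.integral_ofReal]
    rw [intervalIntegral.integral_of_le ha.le, intervalIntegral.integral_of_le ha.le]
    refine MeasureTheory.setIntegral_congr_fun measurableSet_Ioc fun z hz => ?_
    have hz0 : (0:ℝ) ≤ z := le_of_lt hz.1
    have hz1 : (0:ℝ) ≤ a - z := sub_nonneg.mpr hz.2
    rw [Complex.ofReal_mul, Complex.ofReal_cpow hz0, Complex.ofReal_cpow hz1]
    push_cast
    ring
  have hscaled := Complex.betaIntegral_scaled (p:ℂ) (q:ℂ) ha
  have hgam := Complex.Gamma_mul_Gamma_eq_betaIntegral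
    (by simpa using hp : 0 < Complex.re (p:ℂ)) (by simpa using hq : 0 < Complex.re (q:ℂ))
  have hne : Complex.Gamma ((p:ℂ) + (q:ℂ)) ≠ 0 :=
    Complex.Gamma_ne_zero_of_re_pos (by simp [Complex.add_re]; positivity)
  have hbeta : Complex.betaIntegral (p:ℂ) (q:ℂ)
      = Complex.Gamma (p:ℂ) * Complex.Gamma (q:ℂ) / Complex.Gamma ((p:ℂ)+(q:ℂ)) := by
    field_simp
    linear_combination -hgam
  have hpow : ((a:ℂ)) ^ ((p:ℂ) + (q:ℂ) - 1) = ((a ^ (p+q-1) : ℝ) : ℂ) := by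
    rw [Complex.ofReal_cpow ha.le]
    push_cast
    ring_nf
  apply Complex.ofReal_injective
  rw [hC, hscaled, hbeta, hpow]
  rw [show ((p:ℂ) + (q:ℂ)) = ((p + q : ℝ) : ℂ) by push_cast; ring]
  rw [Complex.Gamma_ofReal, Complex.Gamma_ofReal, Complex.Gamma_ofReal]
  push_cast
  ring

lemma betaIntegrable {s t a b : ℝ} (hs : -1 < s) (ht : -1 < t) (hab : a < b) :
    IntervalIntegrable (fun y => (y - a)^s * (b - y)^t) MeasureTheory.volume a b := by
  set c : ℝ := (a+b)/2 with hc
  have hac : a < c := by rw [hc]; linarith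
  have hcb : c < b := by rw [hc]; linarith
  have part1 : IntervalIntegrable (fun y => (y - a)^s * (b - y)^t) MeasureTheory.volume a c := by
    have h1 : IntervalIntegrable (fun y : ℝ => (y - a)^s) MeasureTheory.volume a c := by
      have h0 := (intervalIntegral.intervalIntegrable_rpow' (a := 0) (b := c - a) hs).comp_sub_right a
      rwa [show (0:ℝ) + a = a by ring, show c - a + a = c by ring] at h0
    refine h1.mul_continuousOn ?_
    refine ContinuousOn.rpow_const ((continuous_const.sub continuous_id).continuousOn) ?_
    intro y hy
    rw [uIcc_of_le hac.le] at hy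
    left
    try simp only [id_eq]
    have hyb : y < b := lt_of_le_of_lt hy.2 hcb
    exact sub_ne_zero_of_ne hyb.ne'
  have part2 : IntervalIntegrable (fun y => (y - a)^s * (b - y)^t) MeasureTheory.volume c b := by
    have h2 : IntervalIntegrable (fun y : ℝ => (b - y)^t) MeasureTheory.volume c b := by
      have h3 := (intervalIntegral.intervalIntegrable_rpow' (a := b - c) (b := 0) ht).comp_sub_left b
      rwa [show b - (b - c) = c by ring, show b - 0 = b by ring] at h3
    refine h2.continuousOn_mul ?_
    refine ContinuousOn.rpow_const ((continuous_id.sub continuous_const).continuousOn) ?_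
    intro y hy
    rw [uIcc_of_le hcb.le] at hy
    left
    try simp only [id_eq]
    have hya : a < y := lt_of_lt_of_le hac hy.1
    exact sub_ne_zero_of_ne hya.ne'
  exact part1.trans part2

lemma shifted_beta {s ρ x : ℝ} (hs : -1 < s) (hρ : 0 < ρ) (hx : -1 < x) :
    ∫ y in (-1:ℝ)..x, (1+y)^s * (x-y)^(ρ-1)
      = Real.Gamma (s+1) * Real.Gamma ρ / Real.Gamma (s+1+ρ) * (1+x)^(s+ρ) := by
  have key := intervalIntegral.integral_comp_add_right (a := -1) (b := x) (d := 1)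
    (fun z => z^s * ((1+x) - z)^(ρ-1))
  have h1 : ∀ y : ℝ, (fun z => z^s * ((1+x) - z)^(ρ-1)) (y + 1) = (1+y)^s * (x-y)^(ρ-1) := by
    intro y
    simp only
    rw [show (1:ℝ) + y = y + 1 by ring, show x - y = (1+x) - (y+1) by ring]
  rw [intervalIntegral.integral_congr (fun y _ => h1 y)] at key
  rw [show (-1:ℝ) + 1 = 0 by ring] at key
  rw [key]
  have hb := real_beta (p := s+1) (q := ρ) (a := x + 1) (by linarith) hρ (by linarith)
  have h2 : ∀ z : ℝ, z ^ (s+1-1) * ((x+1) - z)^(ρ-1) = z^s * ((1+x) - z)^(ρ-1) := by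
    intro z
    rw [show s+1-1 = s by ring, show (x+1:ℝ) = 1+x by ring]
  rw [intervalIntegral.integral_congr (fun z _ => h2 z)] at hb
  rw [hb]
  rw [show s+1+ρ-1 = s+ρ by ring, show (1:ℝ)+x = x+1 by ring]

lemma Gamma_pp (c : ℝ) (hc : 0 < c) (K : ℕ) :
    Real.Gamma c * (∏ i ∈ Finset.range K, (c + i)) = Real.Gamma (c + K) := by
  induction K with
  | zero => simp
  | succ K ih =>
    rw [Finset.prod_range_succ, ← mul_assoc, ih]
    have hck : c + (K:ℝ) ≠ 0 := by positivity
    rw [show c + ((K:ℕ)+1 : ℕ) = (c + K) + 1 by push_cast; ring]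
    rw [Real.Gamma_add_one hck]
    ring

lemma Gamma_pp' (c : ℝ) (hc : 0 < c) (K : ℕ) :
    Real.Gamma c * pp c K = Real.Gamma (c + K) := Gamma_pp c hc K

lemma myIntegrable {s t x : ℝ} (hs : -1 < s) (ht : -1 < t) (hx : -1 < x) :
    IntervalIntegrable (fun y => (1+y)^s * (x-y)^t) MeasureTheory.volume (-1) x := by
  have h := betaIntegrable (a := -1) (b := x) hs ht hx
  have e : (fun y : ℝ => (1+y)^s * (x-y)^t) = fun y => (y - (-1))^s * (x - y)^t := by
    funext y
    rw [show (1:ℝ)+y = y - (-1) by ring]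
  rw [e]
  exact h

theorem stmt7 (ρ α β : ℝ) (hρ : 0 < ρ) (hβ : -1 < β) (n : ℕ)
    (x : ℝ) (hx : x ∈ Set.Ioo (-1 : ℝ) 1) :
    fracInt (-1) ρ (fun y => (1 + y) ^ β * jacobiP n α β y) x
      = Real.Gamma (n + β + 1) / Real.Gamma (n + β + ρ + 1)
          * (1 + x) ^ (β + ρ) * jacobiP n (α - ρ) (β + ρ) x := by
  obtain ⟨hx1, hx2⟩ := hx
  have hx0 : (0:ℝ) < 1 + x := by linarith
  set γ : ℝ := α + β + n + 1 with hγ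
  simp only [fracInt]
  have hcongr : ∫ y in (-1:ℝ)..x, (1 + y) ^ β * jacobiP n α β y * (x - y) ^ (ρ - 1)
      = ∫ y in (-1:ℝ)..x, (∑ m ∈ Finset.range (n+1),
          ((1 / (n.factorial : ℝ)) * ((n.choose m : ℝ) * (-1:ℝ)^(n-m) * pp (β+m+1) (n-m) * pp γ m) / 2^m)
            * ((1+y) ^ (β + (m:ℝ)) * (x - y) ^ (ρ - 1))) := by
    rw [intervalIntegral.integral_of_le hx1.le, intervalIntegral.integral_of_le hx1.le]
    refine MeasureTheory.setIntegral_congr_fun measurableSet_Ioc fun y hy => ?_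
    have hy0 : (0:ℝ) < 1 + y := by have := hy.1; linarith
    rw [jacobi_reflect n α β y, Finset.mul_sum, Finset.mul_sum, Finset.sum_mul]
    refine Finset.sum_congr rfl fun m hm => ?_
    have hr : (1+y)^(β + (m:ℝ)) = (1+y)^β * (1+y)^(m:ℕ) := by
      rw [← Real.rpow_natCast (1+y) m, ← Real.rpow_add hy0]
    rw [hr, div_pow]
    ring
  rw [hcongr, intervalIntegral.integral_finset_sum (fun m hm => by
    have hβm : (-1:ℝ) < β + (m:ℝ) := by have := Nat.cast_nonneg (α := ℝ) m; linarith
    exact (myIntegrable hβm (by linarith : (-1:ℝ) < ρ - 1) hx1).const_mul _)]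
  have hint : ∀ m ∈ Finset.range (n+1),
      (∫ y in (-1:ℝ)..x,
          ((1 / (n.factorial : ℝ)) * ((n.choose m : ℝ) * (-1:ℝ)^(n-m) * pp (β+m+1) (n-m) * pp γ m) / 2^m)
            * ((1+y) ^ (β + (m:ℝ)) * (x - y) ^ (ρ - 1)))
      = ((1 / (n.factorial : ℝ)) * ((n.choose m : ℝ) * (-1:ℝ)^(n-m) * pp (β+m+1) (n-m) * pp γ m) / 2^m)
          * (Real.Gamma (β+(m:ℝ)+1) * Real.Gamma ρ / Real.Gamma (β+(m:ℝ)+1+ρ) * (1+x)^(β+(m:ℝ)+ρ)) := by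
    intro m hm
    have hβm : (-1:ℝ) < β + (m:ℝ) := by have := Nat.cast_nonneg (α := ℝ) m; linarith
    rw [intervalIntegral.integral_const_mul, shifted_beta hβm hρ hx1]
  rw [Finset.sum_congr rfl hint, jacobi_reflect n (α-ρ) (β+ρ) x, Finset.mul_sum, Finset.mul_sum,
    Finset.mul_sum]
  refine Finset.sum_congr rfl fun m hm => ?_
  have hmn : m ≤ n := Nat.lt_succ_iff.mp (Finset.mem_range.mp hm)
  have hm0 : (0:ℝ) ≤ (m:ℝ) := Nat.cast_nonneg m
  have h1 : (0:ℝ) < β + (m:ℝ) + 1 := by linarith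
  have h2 : (0:ℝ) < β + ρ + (m:ℝ) + 1 := by linarith
  have hG1 : Real.Gamma (β+(m:ℝ)+1) * pp (β+(m:ℝ)+1) (n-m) = Real.Gamma (β+(n:ℝ)+1) := by
    rw [Gamma_pp' _ h1 (n-m)]
    congr 1
    rw [Nat.cast_sub hmn]
    ring
  have hG2 : Real.Gamma (β+ρ+(m:ℝ)+1) * pp (β+ρ+(m:ℝ)+1) (n-m) = Real.Gamma (β+ρ+(n:ℝ)+1) := by
    rw [Gamma_pp' _ h2 (n-m)]
    congr 1
    rw [Nat.cast_sub hmn]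
    ring
  have hPpos : (0:ℝ) < pp (β+ρ+(m:ℝ)+1) (n-m) := by
    rw [pp]
    refine Finset.prod_pos fun i _ => ?_
    have := Nat.cast_nonneg (α := ℝ) i
    linarith
  have hGρ : (0:ℝ) < Real.Gamma ρ := Real.Gamma_pos_of_pos hρ
  have hGd : (0:ℝ) < Real.Gamma (β+(m:ℝ)+1+ρ) := Real.Gamma_pos_of_pos (by linarith)
  have hGB : (0:ℝ) < Real.Gamma (β+ρ+(n:ℝ)+1) := Real.Gamma_pos_of_pos (by linarith [Nat.cast_nonneg (α := ℝ) n])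
  have hfact : (0:ℝ) < (n.factorial : ℝ) := by positivity
  have hpx : (1+x)^(β + (m:ℝ) + ρ) = (1+x)^(β+ρ) * (1+x)^(m:ℕ) := by
    rw [← Real.rpow_natCast (1+x) m, ← Real.rpow_add hx0]
    congr 1
    ring
  have hγeq : pp (α - ρ + (β + ρ) + (n:ℝ) + 1) m = pp γ m := by
    rw [hγ]
    congr 1
    ring
  have harg : β + (m:ℝ) + 1 + ρ = β+ρ+(m:ℝ)+1 := by ring
  have harg2 : (n:ℝ) + β + 1 = β + (n:ℝ) + 1 := by ring
  have harg3 : (n:ℝ) + β + ρ + 1 = β + ρ + (n:ℝ) + 1 := by ring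
  rw [hγeq, hpx, harg, harg2, harg3, div_pow]
  have hB : Real.Gamma (β+ρ+(n:ℝ)+1) = Real.Gamma (β+ρ+(m:ℝ)+1) * pp (β+ρ+(m:ℝ)+1) (n-m) := hG2.symm
  have hA : Real.Gamma (β+(n:ℝ)+1) = Real.Gamma (β+(m:ℝ)+1) * pp (β+(m:ℝ)+1) (n-m) := hG1.symm
  rw [hB, hA]
  have hGd' : Real.Gamma (β+ρ+(m:ℝ)+1) ≠ 0 := by rw [← harg]; exact hGd.ne'
  field_simp
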